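/- For any nonzero x ∈ ℓ², the unilateral shift M satisfies |⟨Mx, x⟩| < ‖x‖². -/

import Mathlib

local notation "ℓ²" => lp (fun _ : ℕ => ℂ) 2

open scoped ComplexInnerProductSpace in
/-- For every nonzero `x ∈ ℓ²`, the unilateral shift `M` satisfies
`|⟨M x, x⟩| < ‖x‖²`. -/
theorem shift_numerical_range_open_disc
    (M : ℓ² →L[ℂ] ℓ²)
    (hM : ∀ x : ℓ², (M x) 0 = 0 ∧ ∀ n : ℕ, (M x) (n + 1) = x n)
    (x : ℓ²) (hx : x ≠ 0) :
    ‖⟪M x, x⟫‖ < ‖x‖ ^ 2 := by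
  obtain ⟨h0, hs⟩ := hM x
  -- ‖M x‖ = ‖x‖
  have hinner : ⟪M x, M x⟫ = ⟪x, x⟫ := by
    rw [lp.inner_eq_tsum, lp.inner_eq_tsum]
    have hsum : Summable fun i => (inner ℂ ((M x) i) ((M x) i) : ℂ) := lp.summable_inner (M x) (M x)
    rw [Summable.tsum_eq_zero_add hsum]
    simp only [h0, hs, inner_zero_left, zero_add]
  have hnorm : ‖M x‖ = ‖x‖ := by
    rw [@norm_eq_sqrt_re_inner ℂ, @norm_eq_sqrt_re_inner ℂ, hinner]
  have hMx0 : M x ≠ 0 := by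
    intro h
    apply hx
    rw [← norm_eq_zero, ← hnorm, h, norm_zero]
  have hCS : ‖⟪M x, x⟫‖ ≤ ‖x‖ ^ 2 := by
    calc ‖⟪M x, x⟫‖ ≤ ‖M x‖ * ‖x‖ := norm_inner_le_norm _ _
    _ = ‖x‖ ^ 2 := by rw [hnorm, sq]
  rcases lt_or_eq_of_le hCS with h | h
  · exact h
  · exfalso
    have heq : ‖⟪M x, x⟫‖ = ‖M x‖ * ‖x‖ := by rw [hnorm, ← sq, h]
    obtain ⟨r, hr, hrx⟩ := (norm_inner_eq_norm_iff hMx0 hx).1 heq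
    have hcoord : ∀ n, x n = r * (M x) n := by
      intro n
      conv_lhs => rw [hrx]
      simp [lp.coeFn_smul]
    have hzero : ∀ n, x n = 0 := by
      intro n
      induction n with
      | zero => rw [hcoord 0, h0, mul_zero]
      | succ k ih => rw [hcoord (k + 1), hs k, ih, mul_zero]
    apply hx
    ext n
    exact hzero n
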